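/- The intersection of two skolemian sets is semiskolemian. Concretely, if S = Def(α₁,…,αₙ;α) and S' = Def(β₁,…,β_m;β), then S ∩ S' = ⋃_{P correct} Def((α_i ∩ β_j)_{(i,j)∈P, i,j ≥ 1} together with (α_i ∩ β)_{(i,0)∈P} and (α ∩ β_j)_{(0,j)∈P}; α ∩ β), where the union ranges over correct sets P ⊆ ({0}∪[n]) × ({0}∪[m]). -/

import Mathlib

/-- Componentwise `p`-adic valuation of a vector `w ∈ ℕ^d`. -/
def vp {d : ℕ} (p : ℕ) (w : Fin d → ℕ) : Fin d → ℕ := fun t => padicValNat p (w t)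

/-- The skolemian set `Def(α₁, …; α)` determined by a family of exceptional
semilinear sets `αs` (indexed by `ι`) and a default set `α`: the set of vectors
`w ∈ (ℕ_{>0})^d` such that there are pairwise distinct primes `p i` with
`vp (p i) w ∈ αs i`, and `vp q w ∈ α` for every other prime `q` with
`vp q w ≠ 0`. -/
def SkolemDef {d : ℕ} {ι : Type} (αs : ι → Set (Fin d → ℕ)) (α : Set (Fin d → ℕ)) :
    Set (Fin d → ℕ) :=
  {w | (∀ t, 0 < w t) ∧ ∃ p : ι → ℕ,
    (∀ i, (p i).Prime) ∧ Function.Injective p ∧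
    (∀ i, vp (p i) w ∈ αs i) ∧
    ∀ q : ℕ, q.Prime → (∀ i, p i ≠ q) → vp q w ≠ 0 → vp q w ∈ α}

/-- A linear subset of `ℕ^d`: a base vector plus arbitrary `ℕ`-combinations of
finitely many period vectors. -/
def IsLinear {d : ℕ} (A : Set (Fin d → ℕ)) : Prop :=
  ∃ (b : Fin d → ℕ) (k : ℕ) (per : Fin k → Fin d → ℕ),
    A = {v | ∃ c : Fin k → ℕ, v = b + ∑ j, c j • per j}

/-- A semilinear subset of `ℕ^d`: a finite union of linear sets. -/
def IsSemilinear {d : ℕ} (A : Set (Fin d → ℕ)) : Prop :=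
  ∃ (m : ℕ) (L : Fin m → Set (Fin d → ℕ)), (∀ i, IsLinear (L i)) ∧ A = ⋃ i, L i

/-- A skolemian subset of `(ℕ_{>0})^d`. -/
def IsSkolemian {d : ℕ} (S : Set (Fin d → ℕ)) : Prop :=
  ∃ (n : ℕ) (αs : Fin n → Set (Fin d → ℕ)) (α : Set (Fin d → ℕ)),
    (∀ i, IsSemilinear (αs i)) ∧ IsSemilinear α ∧ (0 : Fin d → ℕ) ∈ α ∧
    (∀ i, (0 : Fin d → ℕ) ∉ αs i) ∧ S = SkolemDef αs α

/-- A semiskolemian set: a finite union of skolemian sets. -/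
def IsSemiskolemian {d : ℕ} (S : Set (Fin d → ℕ)) : Prop :=
  ∃ (m : ℕ) (T : Fin m → Set (Fin d → ℕ)), (∀ i, IsSkolemian (T i)) ∧ S = ⋃ i, T i

/-- `M` is a matching in the bipartite graph with edge set `E ⊆ L × R`:
a set of pairwise non-adjacent edges. -/
def IsBipMatching {L R : Type*} (E M : Set (L × R)) : Prop :=
  M ⊆ E ∧ ∀ e ∈ M, ∀ f ∈ M, e ≠ f → e.1 ≠ f.1 ∧ e.2 ≠ f.2

/-- `M` covers every left vertex in `L'`. -/
def CoversL {L R : Type*} (M : Set (L × R)) (L' : Set L) : Prop :=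
  ∀ l ∈ L', ∃ e ∈ M, e.1 = l

/-- `M` covers every right vertex in `R'`. -/
def CoversR {L R : Type*} (M : Set (L × R)) (R' : Set R) : Prop :=
  ∀ r ∈ R', ∃ e ∈ M, e.2 = r

/-- A set `P ⊆ ({0} ∪ [n]) × ({0} ∪ [m])` (with `none` playing the role of `0`)
is correct if every `i ∈ [n]` is paired with exactly one `j ∈ {0} ∪ [m]` and
every `j ∈ [m]` is paired with exactly one `i ∈ {0} ∪ [n]`. -/
def Correct {n m : ℕ} (P : Set (Option (Fin n) × Option (Fin m))) : Prop :=
  (∀ i : Fin n, ∃! j : Option (Fin m), (some i, j) ∈ P) ∧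
  (∀ j : Fin m, ∃! i : Option (Fin n), (i, some j) ∈ P)

/-- The exceptional set attached to a pair `(i,j) ∈ P`: `αᵢ ∩ βⱼ` when
`i, j ≥ 1`, `αᵢ ∩ β` for `(i, 0)` and `α ∩ βⱼ` for `(0, j)`. -/
def pairSet {d n m : ℕ} (αs : Fin n → Set (Fin d → ℕ)) (α : Set (Fin d → ℕ))
    (βs : Fin m → Set (Fin d → ℕ)) (β : Set (Fin d → ℕ))
    (e : Option (Fin n) × Option (Fin m)) : Set (Fin d → ℕ) :=
  match e with
  | (some i, some j) => αs i ∩ βs j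
  | (some i, none) => αs i ∩ β
  | (none, some j) => α ∩ βs j
  | (none, none) => ∅

/-- The intersection of two skolemian sets is the union, over all correct `P`,
of the skolemian sets `Def((αᵢ ∩ βⱼ)_{(i,j) ∈ P}; α ∩ β)`; in particular it is
semiskolemian. -/
theorem skolemDef_inter {d n m : ℕ}
    (αs : Fin n → Set (Fin d → ℕ)) (α : Set (Fin d → ℕ))
    (βs : Fin m → Set (Fin d → ℕ)) (β : Set (Fin d → ℕ))
    (hslα : ∀ i, IsSemilinear (αs i)) (hslβ : ∀ j, IsSemilinear (βs j))
    (hα : IsSemilinear α) (hβ : IsSemilinear β)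
    (h0α : (0 : Fin d → ℕ) ∈ α) (h0β : (0 : Fin d → ℕ) ∈ β)
    (h0αs : ∀ i, (0 : Fin d → ℕ) ∉ αs i) (h0βs : ∀ j, (0 : Fin d → ℕ) ∉ βs j) :
    SkolemDef αs α ∩ SkolemDef βs β =
      ⋃ P ∈ {P : Set (Option (Fin n) × Option (Fin m)) | Correct P},
        SkolemDef
          (fun e : {e : Option (Fin n) × Option (Fin m) // e ∈ P ∧ e ≠ (none, none)} =>
            pairSet αs α βs β e.1)
          (α ∩ β) := by

  classical
  ext w
  simp only [Set.mem_inter_iff, Set.mem_iUnion, Set.mem_setOf_eq]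
  constructor
  · rintro ⟨⟨hw, p, hp, hpinj, hpα, hpo⟩, -, q, hq, hqinj, hqβ, hqo⟩
    refine ⟨{e | match e with
        | (some i, some j) => p i = q j
        | (some i, none) => ∀ j, p i ≠ q j
        | (none, some j) => ∀ i, p i ≠ q j
        | (none, none) => False}, ⟨?_, ?_⟩, hw,
      fun e => match e.1 with
        | (some i, _) => p i
        | (none, some j) => q j
        | (none, none) => 2, ?_, ?_, ?_, ?_⟩
    · intro i
      by_cases h : ∃ j, p i = q j
      · obtain ⟨j, hj⟩ := h
        refine ⟨some j, hj, ?_⟩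
        rintro (_ | j') hj'
        · exact absurd hj (hj' j)
        · exact congrArg some (hqinj (hj'.symm.trans hj))
      · refine ⟨none, fun j hj => h ⟨j, hj⟩, ?_⟩
        rintro (_ | j') hj'
        · rfl
        · exact absurd ⟨j', hj'⟩ h
    · intro j
      by_cases h : ∃ i, p i = q j
      · obtain ⟨i, hi⟩ := h
        refine ⟨some i, hi, ?_⟩
        rintro (_ | i') hi'
        · exact absurd hi (hi' i)
        · exact congrArg some (hpinj (hi'.trans hi.symm))
      · refine ⟨none, fun i hi => h ⟨i, hi⟩, ?_⟩
        rintro (_ | i') hi'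
        · rfl
        · exact absurd ⟨i', hi'⟩ h
    · -- primality
      rintro ⟨⟨(_ | i), (_ | j)⟩, he, hne⟩
      · exact absurd rfl hne
      · exact hq j
      · exact hp i
      · exact hp i
    · -- injectivity
      rintro ⟨⟨(_ | i), (_ | j)⟩, he, hne⟩ ⟨⟨(_ | i'), (_ | j')⟩, he', hne'⟩ h
      · exact absurd rfl hne
      · exact absurd rfl hne
      · exact absurd rfl hne
      · exact absurd rfl hne
      · exact absurd rfl hne'
      · cases hqinj h; rfl
      · exact absurd h.symm (he' j)
      · exact absurd h.symm (he i')
      · exact absurd rfl hne'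
      · exact absurd h (he j')
      · cases hpinj h; rfl
      · exact absurd (h.trans he') (he j')
      · exact absurd rfl hne'
      · exact absurd h (he' i)
      · exact absurd (h.symm.trans he) (he' j)
      · have h2 : q j = q j' := he.symm.trans (h.trans he')
        cases hpinj h; cases hqinj h2; rfl
    · -- vp membership
      rintro ⟨⟨(_ | i), (_ | j)⟩, he, hne⟩
      · exact absurd rfl hne
      · refine ⟨hpo (q j) (hq j) he ?_, hqβ j⟩
        intro h0
        exact h0βs j (h0 ▸ hqβ j)
      · refine ⟨hpα i, hqo (p i) (hp i) (fun j hj => he j hj.symm) ?_⟩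
        intro h0
        exact h0αs i (h0 ▸ hpα i)
      · have hpq : p i = q j := he
        refine ⟨hpα i, ?_⟩
        rw [show vp (p i) w = vp (q j) w from by rw [hpq]]
        exact hqβ j
    · -- other primes
      intro s hs hne hv
      have hps : ∀ i, p i ≠ s := by
        intro i
        by_cases h : ∃ j, p i = q j
        · obtain ⟨j, hj⟩ := h
          exact hne ⟨(some i, some j), hj, by simp⟩
        · exact hne ⟨(some i, none), fun j hj => h ⟨j, hj⟩, by simp⟩
      have hqs : ∀ j, q j ≠ s := by
        intro j
        by_cases h : ∃ i, p i = q j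
        · obtain ⟨i, hi⟩ := h
          have h2 : p i ≠ s := hne ⟨(some i, some j), hi, by simp⟩
          exact fun hqj => h2 (hi.trans hqj)
        · exact hne ⟨(none, some j), fun i hi => h ⟨i, hi⟩, by simp⟩
      exact ⟨hpo s hs hps hv, hqo s hs hqs hv⟩
  · rintro ⟨P, hP, hw, r, hr, hrinj, hrmem, hro⟩
    have subL : ∀ (i : Fin n) (o : Option (Fin m)),
        pairSet αs α βs β (some i, o) ⊆ αs i := by
      rintro i (_ | j) <;> exact Set.inter_subset_left
    have subR : ∀ (o : Option (Fin n)) (j : Fin m),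
        pairSet αs α βs β (o, some j) ⊆ βs j := by
      rintro (_ | i) j <;> exact Set.inter_subset_right
    obtain ⟨hP1, hP2⟩ := hP
    choose jf hjf hjfu using hP1
    choose iff' hif hifu using hP2
    have hneE : ∀ i : Fin n,
        ((some i, jf i) : Option (Fin n) × Option (Fin m)) ≠ (none, none) := by
      intro i h
      exact Option.some_ne_none _ (congrArg (Prod.fst : Option (Fin n) × Option (Fin m) → Option (Fin n)) h)
    have hneF : ∀ j : Fin m,
        ((iff' j, some j) : Option (Fin n) × Option (Fin m)) ≠ (none, none) := by
      intro j h
      exact Option.some_ne_none _ (congrArg (Prod.snd : Option (Fin n) × Option (Fin m) → Option (Fin m)) h)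
    constructor
    · refine ⟨hw, fun i => r ⟨(some i, jf i), hjf i, hneE i⟩, fun i => hr _, ?_, ?_, ?_⟩
      · intro i i' h
        have h2 := hrinj h
        have h3 : some i = some i' := congrArg (fun e => (Subtype.val e).1) h2
        exact Option.some_injective _ h3
      · intro i
        exact subL i (jf i) (hrmem ⟨(some i, jf i), hjf i, hneE i⟩)
      · intro s hs hne hv
        by_cases h : ∃ e : {e // e ∈ P ∧ e ≠ (none, none)}, r e = s
        · obtain ⟨⟨⟨(_ | i0), o2⟩, he, hne'⟩, hre⟩ := h
          · rcases o2 with _ | j0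
            · exact absurd rfl hne'
            · have h2 := hrmem ⟨(none, some j0), he, hne'⟩
              rw [hre] at h2
              exact h2.1
          · have ho : o2 = jf i0 := hjfu i0 o2 he
            subst ho
            exact absurd hre (hne i0)
        · push_neg at h
          exact (hro s hs h hv).1
    · refine ⟨hw, fun j => r ⟨(iff' j, some j), hif j, hneF j⟩, fun j => hr _, ?_, ?_, ?_⟩
      · intro j j' h
        have h2 := hrinj h
        have h3 : some j = some j' := congrArg (fun e => (Subtype.val e).2) h2
        exact Option.some_injective _ h3
      · intro j
        exact subR (iff' j) j (hrmem ⟨(iff' j, some j), hif j, hneF j⟩)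
      · intro s hs hne hv
        by_cases h : ∃ e : {e // e ∈ P ∧ e ≠ (none, none)}, r e = s
        · obtain ⟨⟨⟨o1, (_ | j0)⟩, he, hne'⟩, hre⟩ := h
          · rcases o1 with _ | i0
            · exact absurd rfl hne'
            · have h2 := hrmem ⟨(some i0, none), he, hne'⟩
              rw [hre] at h2
              exact h2.2
          · have ho : o1 = iff' j0 := hifu j0 o1 he
            subst ho
            exact absurd hre (hne j0)
        · push_neg at h
          exact (hro s hs h hv).2
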